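/- Let A, B be bounded normal operators on a Hilbert space with polar decompositions A = u|A|, B = v|B| (u, v unitary). Suppose |A| and |B| commute, u and v commute, u|B|u* = q|B| and v|A|v* = q|A| for some q > 0, and u commutes with |A|, v commutes with |B|. Then A B = B A and A B* = q² B* A. -/
import Mathlib


/-- Abstract form of the commutation relations of the twisted generators.
Let `A = u|A|`, `B = v|B|` be polar decompositions of bounded normal operators
(`u, v` unitary, `|A|, |B| ≥ 0`), with `|A|` and `|B|` commuting, `u` and `v`
commuting, `u` commuting with `|A|`, `v` with `|B|`, and
`u|B|u* = q|B|`, `v|A|v* = q|A|` for some `q > 0`. Then `AB = BA` and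
`AB* = q² B*A`. -/
theorem twisted_commutation_relations {H : Type*} [NormedAddCommGroup H]
    [InnerProductSpace ℂ H] [CompleteSpace H]
    (A B u v a b : H →L[ℂ] H) (q : ℝ) (hq : 0 < q)
    (hu : u * star u = 1 ∧ star u * u = 1)
    (hv : v * star v = 1 ∧ star v * v = 1)
    (ha : a.IsPositive) (hb : b.IsPositive)
    (hA : A = u * a) (hB : B = v * b)
    (hAnormal : star A * A = A * star A) (hBnormal : star B * B = B * star B)
    (hab : a * b = b * a) (huv : u * v = v * u)
    (hua : u * a = a * u) (hvb : v * b = b * v)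
    (hub : u * b * star u = (q : ℂ) • b)
    (hva : v * a * star v = (q : ℂ) • a) :
    A * B = B * A ∧ A * star B = ((q : ℂ) ^ 2) • (star B * A) := by
  obtain ⟨hu1, hu2⟩ := hu
  obtain ⟨hv1, hv2⟩ := hv
  have hq' : (q : ℂ) ≠ 0 := by exact_mod_cast hq.ne'
  have hbs : star b = b := hb.isSelfAdjoint
  have hva' : v * a = (q : ℂ) • (a * v) := by
    have h := congrArg (fun x => x * v) hva
    simpa [mul_assoc, hv2, smul_mul_assoc] using h
  have hub' : u * b = (q : ℂ) • (b * u) := by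
    have h := congrArg (fun x => x * u) hub
    simpa [mul_assoc, hu2, smul_mul_assoc] using h
  have hasv : a * star v = (q : ℂ) • (star v * a) := by
    have h := congrArg (fun x => star v * x) hva
    simpa [← mul_assoc, hv2, mul_smul_comm] using h
  have hvsu : star v * u = u * star v := by
    have h := congrArg (fun x => star v * x * star v) huv
    simp only [← mul_assoc, hv2, one_mul] at h
    simpa [mul_assoc, hv1] using h
  constructor
  · apply smul_right_injective (H →L[ℂ] H) hq'
    show (q : ℂ) • (A * B) = (q : ℂ) • (B * A)
    have h1 : (q : ℂ) • (A * B) = u * v * (a * b) := by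
      rw [hA, hB]
      calc (q : ℂ) • (u * a * (v * b))
          = u * ((q : ℂ) • (a * v)) * b := by
            simp only [smul_mul_assoc, mul_smul_comm, mul_assoc]
        _ = u * (v * a) * b := by rw [← hva']
        _ = u * v * (a * b) := by simp only [mul_assoc]
    have h2 : (q : ℂ) • (B * A) = u * v * (a * b) := by
      rw [hA, hB]
      calc (q : ℂ) • (v * b * (u * a))
          = v * ((q : ℂ) • (b * u)) * a := by
            simp only [smul_mul_assoc, mul_smul_comm, mul_assoc]
        _ = v * (u * b) * a := by rw [← hub']
        _ = v * u * (b * a) := by simp only [mul_assoc]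
        _ = u * v * (a * b) := by rw [← huv, ← hab]
    rw [h1, h2]
  · have hsB : star B = b * star v := by rw [hB, star_mul, hbs]
    rw [hA, hsB]
    calc u * a * (b * star v)
        = (u * a * b) * star v := by simp only [mul_assoc]
      _ = (a * (u * b)) * star v := by rw [show u * a * b = a * (u * b) by
            rw [← mul_assoc, hua]]
      _ = ((q : ℂ) • (a * b * u)) * star v := by
            rw [hub']; simp only [mul_smul_comm, smul_mul_assoc, mul_assoc]
      _ = (q : ℂ) • (a * b * (u * star v)) := by
            simp only [smul_mul_assoc, mul_assoc]
      _ = (q : ℂ) • (a * b * (star v * u)) := by rw [hvsu]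
      _ = (q : ℂ) • (b * (a * star v) * u) := by
            rw [hab]; simp only [mul_assoc]
      _ = ((q : ℂ) ^ 2) • (b * (star v * a) * u) := by
            rw [hasv]; simp only [mul_smul_comm, smul_mul_assoc, smul_smul, sq]
      _ = ((q : ℂ) ^ 2) • (b * star v * (u * a)) := by
            rw [hua]; simp only [mul_assoc]
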